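/- Let n = p_1^{α_1} ⋯ p_s^{α_s} with s ≥ 2 distinct primes p_1,…,p_s. If m ≥ 2^{s+1}·√(2s−1), then φ_m(n) ≥ (m/2)·Π_{i=1}^s (1 − 1/p_i) = m·φ(n)/(2n). -/

import Mathlib

/-- Legendre's totient function φ_m(n): the number of a ∈ [1,m] coprime to n. -/
def legendrePhi (m n : ℕ) : ℕ :=
  ((Finset.Icc 1 m).filter fun a => Nat.Coprime a n).card

open Finset



-- counting identity
lemma count_eq (m n : ℕ) (hn : 0 < n) :
    (legendrePhi m n : ℤ) =
      ∑ A ∈ n.primeFactors.powerset, (-1 : ℤ) ^ A.card * ((m / ∏ p ∈ A, p : ℕ) : ℤ) := by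
  have key : ∀ a ∈ Finset.Ioc 0 m,
      (if Nat.Coprime a n then (1 : ℤ) else 0)
        = ∑ A ∈ n.primeFactors.powerset,
            (-1 : ℤ) ^ A.card * (if (∏ p ∈ A, p) ∣ a then 1 else 0) := by
    intro a ha
    have ha0 : 0 < a := (Finset.mem_Ioc.mp ha).1
    have expand : ∏ p ∈ n.primeFactors, ((if p ∣ a then (-1 : ℤ) else 0) + 1)
        = ∑ A ∈ n.primeFactors.powerset,
            (-1 : ℤ) ^ A.card * (if (∏ p ∈ A, p) ∣ a then 1 else 0) := by
      rw [Finset.prod_add]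
      refine Finset.sum_congr rfl fun A hA => ?_
      rw [Finset.mem_powerset] at hA
      rw [Finset.prod_const_one, mul_one]
      by_cases h : ∀ p ∈ A, p ∣ a
      · have h1 : (∏ p ∈ A, (if p ∣ a then (-1 : ℤ) else 0)) = ∏ p ∈ A, (-1 : ℤ) :=
          Finset.prod_congr rfl fun p hp => if_pos (h p hp)
        have h2 : (∏ p ∈ A, p) ∣ a :=
          Finset.prod_primes_dvd a
            (fun p hp => (Nat.prime_of_mem_primeFactors (hA hp)).prime) h
        rw [h1, if_pos h2, Finset.prod_const, mul_one]
      · push_neg at h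
        obtain ⟨p, hp, hpa⟩ := h
        have h2 : ¬ (∏ q ∈ A, q) ∣ a := fun hd =>
          hpa (dvd_trans (Finset.dvd_prod_of_mem _ hp) hd)
        rw [if_neg h2, mul_zero, Finset.prod_eq_zero hp (by rw [if_neg hpa])]
    rw [← expand]
    by_cases hc : Nat.Coprime a n
    · rw [if_pos hc]
      refine ((Finset.prod_congr rfl fun p hp => ?_).trans Finset.prod_const_one).symm
      have hnd : ¬ p ∣ a := by
        intro hpa
        have hd : p ∣ Nat.gcd a n := Nat.dvd_gcd hpa (Nat.dvd_of_mem_primeFactors hp)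
        rw [Nat.Coprime] at hc
        rw [hc] at hd
        exact (Nat.prime_of_mem_primeFactors hp).one_lt.ne' (Nat.eq_one_of_dvd_one hd)
      rw [if_neg hnd, zero_add]
    · rw [if_neg hc]
      have hg : Nat.gcd a n ≠ 1 := hc
      obtain ⟨p, hp, hpd⟩ := Nat.exists_prime_and_dvd hg
      have hpa : p ∣ a := hpd.trans (Nat.gcd_dvd_left a n)
      have hpn : p ∣ n := hpd.trans (Nat.gcd_dvd_right a n)
      refine (Finset.prod_eq_zero (Nat.mem_primeFactors.mpr ⟨hp, hpn, hn.ne'⟩) ?_).symm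
      rw [if_pos hpa, neg_add_cancel]
  have : (legendrePhi m n : ℤ) = ∑ a ∈ Finset.Ioc 0 m, (if Nat.Coprime a n then (1:ℤ) else 0) := by
    rw [legendrePhi, Finset.sum_boole, ← Finset.Icc_add_one_left_eq_Ioc, zero_add]
  rw [this, Finset.sum_congr rfl key, Finset.sum_comm]
  refine Finset.sum_congr rfl fun A hA => ?_
  rw [← Finset.mul_sum]
  congr 1
  rw [Finset.sum_boole, Nat.Ioc_filter_dvd_card_eq_div]

-- the largest of s distinct primes is at least 2s-1
lemma max_prime_ge (P : Finset ℕ) (hP : ∀ p ∈ P, p.Prime) (q : ℕ) (hq : q ∈ P)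
    (hmax : ∀ p ∈ P, p ≤ q) : 2 * P.card ≤ q + 1 := by
  set E := P.erase 2 with hE
  rcases E.eq_empty_or_nonempty with h | h
  · have : P.card ≤ 1 := by
      by_cases h2 : 2 ∈ P
      · have hsub : P ⊆ {2} := fun p hp => by
          by_contra hne
          exact absurd (Finset.mem_erase.mpr ⟨by simpa using hne, hp⟩) (by simp [hE ▸ h])
        calc P.card ≤ ({2} : Finset ℕ).card := Finset.card_le_card hsub
          _ = 1 := rfl
      · have hEP : E = P := Finset.erase_eq_of_notMem h2
        rw [← hEP, h]; simp
    have hq2 := (hP q hq).two_le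
    omega
  · -- E nonempty: q is odd and ≥ 3
    obtain ⟨p0, hp0⟩ := h
    have hp0P : p0 ∈ P := Finset.mem_of_mem_erase hp0
    have hp0odd : p0 ≠ 2 := Finset.ne_of_mem_erase hp0
    have hp03 : 3 ≤ p0 := by
      have := (hP p0 hp0P).two_le; omega
    have hq3 : 3 ≤ q := le_trans hp03 (hmax p0 hp0P)
    have hqodd : Odd q := (hP q hq).odd_of_ne_two (by omega)
    -- map E into Icc 1 (q/2) injectively via p ↦ p/2
    have hcard : E.card ≤ q / 2 := by
      have himg : E.image (· / 2) ⊆ Finset.Icc 1 (q / 2) := by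
        intro x hx
        obtain ⟨p, hp, rfl⟩ := Finset.mem_image.mp hx
        have hp3 : 3 ≤ p := by
          have := (hP p (Finset.mem_of_mem_erase hp)).two_le
          have := Finset.ne_of_mem_erase hp; omega
        exact Finset.mem_Icc.mpr ⟨by omega, Nat.div_le_div_right (hmax p (Finset.mem_of_mem_erase hp))⟩
      have hinj : Set.InjOn (· / 2) E := by
        intro x hx y hy hxy
        have hxodd : Odd x := (hP x (Finset.mem_of_mem_erase hx)).odd_of_ne_two (Finset.ne_of_mem_erase hx)
        have hyodd : Odd y := (hP y (Finset.mem_of_mem_erase hy)).odd_of_ne_two (Finset.ne_of_mem_erase hy)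
        obtain ⟨a, rfl⟩ := hxodd; obtain ⟨b, rfl⟩ := hyodd
        simp only at hxy; omega
      calc E.card = (E.image (· / 2)).card := (Finset.card_image_of_injOn hinj).symm
        _ ≤ (Finset.Icc 1 (q / 2)).card := Finset.card_le_card himg
        _ = q / 2 := by rw [Nat.card_Icc]; omega
    have hPE : P.card ≤ E.card + 1 := by
      by_cases h2 : 2 ∈ P
      · rw [hE, Finset.card_erase_add_one h2]
      · rw [hE, Finset.erase_eq_of_notMem h2]; omega
    obtain ⟨k, hk⟩ := hqodd
    omega

lemma prod_bound (P : Finset ℕ) (hP : ∀ p ∈ P, p.Prime) (hne : P.Nonempty) :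
    1 / (2 * Real.sqrt (2 * P.card - 1)) ≤ ∏ p ∈ P, (1 - 1 / (p : ℝ)) := by
  induction P using Finset.induction_on_max with
  | empty => exact absurd hne (by simp)
  | insert a s ha ih =>
    have haP : a ∈ insert a s := Finset.mem_insert_self a s
    have hap : a.Prime := hP a haP
    have ha2 : (2 : ℝ) ≤ a := by exact_mod_cast hap.two_le
    have hainv : 1 - 1 / (a : ℝ) ≥ 1 / 2 := by
      rw [ge_iff_le, le_sub_comm]
      calc 1 / (a : ℝ) ≤ 1 / 2 := by
            apply one_div_le_one_div_of_le <;> linarith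
        _ = 1 - 1 / 2 := by norm_num
    have hanotmem : a ∉ s := fun h => absurd (ha a h) (lt_irrefl a)
    rcases s.eq_empty_or_nonempty with rfl | hs
    · rw [Finset.prod_insert (Finset.notMem_empty a), Finset.prod_empty, mul_one,
        Finset.card_insert_of_notMem (Finset.notMem_empty a), Finset.card_empty]
      simp only [one_div] at hainv ⊢
      norm_num [Real.sqrt_one]
      linarith
    · have hsP : ∀ p ∈ s, p.Prime := fun p hp => hP p (Finset.mem_insert_of_mem hp)
      have ihs := ih hsP hs
      set k := s.card with hk
      have hk1 : 1 ≤ k := Finset.card_pos.mpr hs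
      have hcard : (insert a s).card = k + 1 := Finset.card_insert_of_notMem hanotmem
      have hmax : ∀ p ∈ insert a s, p ≤ a := by
        intro p hp
        rcases Finset.mem_insert.mp hp with rfl | hp
        · exact le_refl p
        · exact (ha p hp).le
      have hage : 2 * (k + 1) ≤ a + 1 := by
        have := max_prime_ge (insert a s) hP a haP hmax
        rwa [hcard] at this
      have hage' : (2 * k + 1 : ℝ) ≤ a := by
        have : 2 * k + 1 ≤ a := by omega
        exact_mod_cast this
      have hk1R : (1 : ℝ) ≤ k := by exact_mod_cast hk1
      set u := Real.sqrt (2 * (k : ℝ) - 1) with hu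
      set v := Real.sqrt (2 * (k : ℝ) + 1) with hv
      have hu2 : u ^ 2 = 2 * (k : ℝ) - 1 := Real.sq_sqrt (by linarith)
      have hv2 : v ^ 2 = 2 * (k : ℝ) + 1 := Real.sq_sqrt (by linarith)
      have hupos : 0 < u := Real.sqrt_pos.mpr (by linarith)
      have hvpos : 0 < v := Real.sqrt_pos.mpr (by linarith)
      have hprodpos : (0:ℝ) < ∏ p ∈ s, (1 - 1 / (p : ℝ)) := by
        apply Finset.prod_pos
        intro p hp
        have h2p : (2:ℝ) ≤ p := by exact_mod_cast (hsP p hp).two_le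
        have : 1 / (p:ℝ) ≤ 1/2 := by apply one_div_le_one_div_of_le <;> linarith
        linarith
      have hfac : (2 * k : ℝ) / (2 * k + 1) ≤ 1 - 1 / (a : ℝ) := by
        have h1 : 1 / (a:ℝ) ≤ 1 / (2 * k + 1) := by
          apply one_div_le_one_div_of_le
          · linarith
          · exact hage'
        have h2 : (2 * k : ℝ) / (2 * k + 1) = 1 - 1 / (2 * k + 1) := by
          field_simp
          ring
        linarith
      have huv : (2 * (k:ℝ) + 1) * u ≤ 2 * k * v := by
        have h1 : ((2 * (k:ℝ) + 1) * u) ^ 2 ≤ (2 * (k:ℝ) * v) ^ 2 := by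
          rw [mul_pow, mul_pow, hu2, hv2]
          nlinarith [hk1R]
        calc (2 * (k:ℝ) + 1) * u = Real.sqrt (((2 * (k:ℝ) + 1) * u) ^ 2) :=
              (Real.sqrt_sq (by positivity)).symm
          _ ≤ Real.sqrt ((2 * (k:ℝ) * v) ^ 2) := Real.sqrt_le_sqrt h1
          _ = 2 * (k:ℝ) * v := Real.sqrt_sq (by positivity)
      have key : 1 / (2 * v) ≤ (2 * k : ℝ) / (2 * k + 1) * (1 / (2 * u)) := by
        rw [div_mul_div_comm, mul_one, div_le_div_iff₀ (by positivity) (by positivity)]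
        nlinarith [huv]
      rw [Finset.prod_insert hanotmem, hcard]
      push_cast
      calc 1 / (2 * Real.sqrt (2 * ((k:ℝ) + 1) - 1))
          = 1 / (2 * v) := by rw [hv, show (2 * ((k:ℝ) + 1) - 1) = 2 * (k:ℝ) + 1 by ring]
        _ ≤ (2 * k : ℝ) / (2 * k + 1) * (1 / (2 * u)) := key
        _ ≤ (1 - 1 / (a : ℝ)) * ∏ p ∈ s, (1 - 1 / (p : ℝ)) := by
            apply mul_le_mul hfac ihs (by positivity)
            linarith

theorem stmt11 (n s m : ℕ) (hn : 0 < n)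
    (hs : n.primeFactors.card = s) (hs2 : 2 ≤ s)
    (hm : (2 : ℝ) ^ (s + 1) * Real.sqrt (2 * s - 1) ≤ (m : ℝ)) :
    (m : ℝ) / 2 * ∏ p ∈ n.primeFactors, (1 - 1 / (p : ℝ)) ≤ (legendrePhi m n : ℝ) ∧
    (m : ℝ) / 2 * ∏ p ∈ n.primeFactors, (1 - 1 / (p : ℝ)) =
      (m : ℝ) * (Nat.totient n : ℝ) / (2 * n) := by
  set P := n.primeFactors with hP
  set Pi := ∏ p ∈ P, (1 - 1 / (p : ℝ)) with hPi
  have hPprime : ∀ p ∈ P, p.Prime := fun p hp => Nat.prime_of_mem_primeFactors hp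
  have hsR : (2:ℝ) ≤ s := by exact_mod_cast hs2
  have hPne : P.Nonempty := Finset.card_pos.mp (by rw [hs]; omega)
  have hsqrtpos : 0 < Real.sqrt (2 * s - 1) := Real.sqrt_pos.mpr (by linarith)
  have hprodpos : (0:ℝ) < Pi := by
    apply Finset.prod_pos
    intro p hp
    have h2p : (2:ℝ) ≤ p := by exact_mod_cast (hPprime p hp).two_le
    have : 1 / (p:ℝ) ≤ 1/2 := by apply one_div_le_one_div_of_le <;> linarith
    linarith
  have hlb : 1 / (2 * Real.sqrt (2 * s - 1)) ≤ Pi := by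
    have := prod_bound P hPprime hPne
    rwa [hs] at this
  have hms : (2:ℝ)^s ≤ m * Pi := by
    calc (2:ℝ)^s = (2^(s+1) * Real.sqrt (2 * s - 1)) * (1 / (2 * Real.sqrt (2 * s - 1))) := by
          rw [pow_succ]
          field_simp
      _ ≤ m * Pi := by
          apply mul_le_mul hm hlb (by positivity)
          positivity
  -- counting lower bound
  have hcount : (legendrePhi m n : ℝ)
      = ∑ A ∈ P.powerset, (-1 : ℝ) ^ A.card * ((m / ∏ p ∈ A, p : ℕ) : ℝ) := by
    calc (legendrePhi m n : ℝ) = ((legendrePhi m n : ℤ) : ℝ) := by norm_cast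
      _ = ((∑ A ∈ P.powerset, (-1 : ℤ) ^ A.card * ((m / ∏ p ∈ A, p : ℕ) : ℤ) : ℤ) : ℝ) := by
          rw [count_eq m n hn]
      _ = ∑ A ∈ P.powerset, (-1 : ℝ) ^ A.card * ((m / ∏ p ∈ A, p : ℕ) : ℝ) := by
          simp only [Int.cast_sum, Int.cast_mul, Int.cast_pow, Int.cast_neg, Int.cast_one,
            Int.cast_natCast]
  -- Ecard = 2^(s-1)
  set Ef := P.powerset.filter (fun A => Even A.card) with hEf
  have hEcard : 2 * Ef.card = 2 ^ s := by
    have hsum0 : ∑ A ∈ P.powerset, (-1 : ℤ) ^ A.card = 0 :=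
      Finset.sum_powerset_neg_one_pow_card_of_nonempty hPne
    have hsplit : ∑ A ∈ P.powerset, (-1 : ℤ) ^ A.card
        = (Ef.card : ℤ) - ((P.powerset.card : ℤ) - Ef.card) := by
      rw [← Finset.sum_filter_add_sum_filter_not P.powerset (fun A => Even A.card)]
      have h1 : ∑ A ∈ Ef, (-1:ℤ) ^ A.card = Ef.card := by
        rw [Finset.sum_congr rfl (fun A hA => ?_), Finset.sum_const, nsmul_eq_mul, mul_one]
        exact Even.neg_one_pow (Finset.mem_filter.mp hA).2
      have h2 : ∑ A ∈ P.powerset.filter (fun A => ¬ Even A.card), (-1:ℤ) ^ A.card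
          = -(P.powerset.filter (fun A => ¬ Even A.card)).card := by
        rw [Finset.sum_congr rfl (fun A hA => ?_), Finset.sum_const, nsmul_eq_mul, mul_neg_one]
        exact Odd.neg_one_pow (Nat.not_even_iff_odd.mp (Finset.mem_filter.mp hA).2)
      rw [h1, h2]
      have h3 := Finset.card_filter_add_card_filter_not
        (s := P.powerset) (p := fun A => Even A.card)
      push_cast [← h3]
      ring
    rw [hsplit, Finset.card_powerset, hs] at hsum0
    have : (2 * Ef.card : ℤ) = 2 ^ s := by push_cast at hsum0 ⊢; linarith
    exact_mod_cast this
  have hlow : (m:ℝ) * Pi - 2^(s-1) ≤ (legendrePhi m n : ℝ) := by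
    rw [hcount]
    have hpoint : ∀ A ∈ P.powerset,
        (-1:ℝ)^A.card * ((m:ℝ) / ((∏ p ∈ A, p : ℕ):ℝ)) - (if Even A.card then (1:ℝ) else 0)
          ≤ (-1 : ℝ) ^ A.card * ((m / ∏ p ∈ A, p : ℕ) : ℝ) := by
      intro A hA
      set d := ∏ p ∈ A, p with hd
      have hdpos : 0 < d := Finset.prod_pos (fun p hp =>
        (hPprime p (Finset.mem_powerset.mp hA hp)).pos)
      have hdR : (0:ℝ) < d := by exact_mod_cast hdpos
      have hub : ((m / d : ℕ) : ℝ) ≤ (m:ℝ) / d := Nat.cast_div_le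
      have hlb2 : (m:ℝ) / d - 1 ≤ ((m / d : ℕ) : ℝ) := by
        have hmod := Nat.div_add_mod m d
        have hmlt := Nat.mod_lt m hdpos
        have hmodR : (d:ℝ) * ((m/d : ℕ):ℝ) + ((m % d : ℕ):ℝ) = m := by exact_mod_cast hmod
        have hmltR : ((m % d : ℕ):ℝ) < d := by exact_mod_cast hmlt
        rw [sub_le_iff_le_add, div_le_iff₀ hdR]
        nlinarith
      by_cases he : Even A.card
      · rw [he.neg_one_pow, if_pos he]
        simpa using hlb2
      · rw [(Nat.not_even_iff_odd.mp he).neg_one_pow, if_neg he]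
        simpa using hub
    have hsum := Finset.sum_le_sum hpoint
    refine le_trans (le_of_eq ?_) hsum
    rw [Finset.sum_sub_distrib]
    congr 1
    · -- ∑ (-1)^|A| m/dA = m * Pi
      have expand : Pi = ∑ A ∈ P.powerset, (-1:ℝ)^A.card / ((∏ p ∈ A, p : ℕ):ℝ) := by
        rw [hPi]
        have : ∀ p ∈ P, (1 - 1/(p:ℝ)) = (-(1/(p:ℝ)) + 1) := fun p _ => by ring
        rw [Finset.prod_congr rfl this, Finset.prod_add]
        refine Finset.sum_congr rfl fun A hA => ?_
        rw [Finset.prod_const_one, mul_one, Nat.cast_prod]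
        calc ∏ i ∈ A, -(1/(i:ℝ)) = ∏ i ∈ A, (-1)/(i:ℝ) :=
              Finset.prod_congr rfl (fun i _ => by ring)
          _ = (∏ _i ∈ A, (-1:ℝ)) / ∏ i ∈ A, (i:ℝ) := Finset.prod_div_distrib (fun _ : ℕ => (-1:ℝ)) (fun i : ℕ => (i:ℝ))
          _ = (-1)^A.card / ∏ i ∈ A, (i:ℝ) := by rw [Finset.prod_const]
      rw [expand, Finset.mul_sum]
      refine Finset.sum_congr rfl fun A hA => ?_
      ring
    · -- ∑ ite Even 1 0 = 2^(s-1)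
      rw [Finset.sum_boole, ← hEf]
      have : Ef.card = 2^(s-1) := by
        have h2 : 2 * Ef.card = 2 * 2^(s-1) := by
          rw [hEcard, ← pow_succ']
          congr 1
          omega
        omega
      rw [this]
      push_cast
      ring
  constructor
  · have hhalf : (2:ℝ)^(s-1) ≤ (m:ℝ)/2 * Pi := by
      have h1 : (2:ℝ)^s = 2 * 2^(s-1) := by
        rw [← pow_succ']
        congr 1
        omega
      rw [h1] at hms
      linarith
    linarith
  · have htot : (Nat.totient n : ℝ) = n * Pi := by
      have h := Nat.totient_eq_mul_prod_factors n
      have h2 := congrArg (fun q : ℚ => (q : ℝ)) h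
      push_cast at h2
      rw [h2, hPi]
      congr 1
      exact Finset.prod_congr rfl fun p _ => by rw [one_div]
    rw [htot]
    have hn0 : (n:ℝ) ≠ 0 := Nat.cast_ne_zero.mpr hn.ne'
    field_simp
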